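/- There exists no Pseudo Type-n vector field on S¹×S²: there are no nonzero homogeneous polynomials P₁, P₂, P₃ ∈ ℝ[x₁,x₂,x₃,x₄] of degree n such that the vector field χ = (P₁,P₂,P₃,0) is a vector field on S¹×S². -/

import Mathlib

set_option maxRecDepth 10000


open MvPolynomial

/-- The action of the polynomial vector field `χ = (P 0, P 1, P 2, P 3)` on a polynomial:
`χf = Σᵢ Pᵢ ∂f/∂xᵢ`. -/
noncomputable def chi (P : Fin 4 → MvPolynomial (Fin 4) ℝ)
    (f : MvPolynomial (Fin 4) ℝ) : MvPolynomial (Fin 4) ℝ :=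
  ∑ i, P i * pderiv i f

/-- `G_a = (x₁² + x₂² - a²)² + x₃² + x₄² - 1`, whose zero set is `S¹ × S²`. -/
noncomputable def Ga (a : ℝ) : MvPolynomial (Fin 4) ℝ :=
  (X 0 ^ 2 + X 1 ^ 2 - C (a ^ 2)) ^ 2 + X 2 ^ 2 + X 3 ^ 2 - 1

noncomputable def phiH : MvPolynomial (Fin 4) ℝ →ₐ[ℝ] Polynomial (MvPolynomial (Fin 4) ℝ) :=
  aeval (fun i => Polynomial.C (X i) * Polynomial.X)

lemma phiH_C (r : ℝ) : phiH (C r) = Polynomial.C (C r) := by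
  simp [phiH, algebraMap_eq, Polynomial.algebraMap_apply]

lemma phiH_monomial (d : Fin 4 →₀ ℕ) (r : ℝ) :
    phiH (monomial d r) = Polynomial.C (monomial d r) * Polynomial.X ^ (d.degree) := by
  rw [monomial_eq, map_mul, phiH_C, Finsupp.prod, map_prod]
  have hx : ∀ i : Fin 4, phiH (X i ^ d i)
      = Polynomial.C (X i ^ d i) * Polynomial.X ^ d i := by
    intro i
    rw [map_pow]
    show ((aeval fun i => Polynomial.C (X i) * Polynomial.X) (X i)) ^ d i = _
    rw [aeval_X, mul_pow, Polynomial.C_pow]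
  rw [Finset.prod_congr rfl fun i _ => hx i, Finset.prod_mul_distrib,
    Finset.prod_pow_eq_pow_sum, ← map_prod, Finsupp.degree, Polynomial.C_mul]
  ring
  rfl

lemma phiH_homog {P : MvPolynomial (Fin 4) ℝ} {m : ℕ} (h : P.IsHomogeneous m) :
    phiH P = Polynomial.C P * Polynomial.X ^ m := by
  conv_lhs => rw [P.as_sum]
  rw [map_sum]
  conv_rhs => rw [P.as_sum, map_sum, Finset.sum_mul]
  refine Finset.sum_congr rfl fun d hd => ?_
  rw [phiH_monomial]
  congr 1
  rw [Finsupp.degree_eq_weight_one]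
  exact congrArg (Polynomial.X ^ ·) (h (mem_support_iff.mp hd))

lemma phiH_eval_one (P : MvPolynomial (Fin 4) ℝ) : Polynomial.eval 1 (phiH P) = P := by
  have h : (Polynomial.evalRingHom (1 : MvPolynomial (Fin 4) ℝ)).comp phiH.toRingHom
      = RingHom.id _ := by
    apply MvPolynomial.ringHom_ext
    · intro r; simp [phiH, algebraMap_eq, Polynomial.algebraMap_apply]
    · intro i; simp [phiH]
  exact RingHom.congr_fun h P

theorem stmt_9 (a : ℝ) (ha : 1 < a) (n : ℕ) :
    ¬ ∃ P₁ P₂ P₃ : MvPolynomial (Fin 4) ℝ,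
      P₁ ≠ 0 ∧ P₂ ≠ 0 ∧ P₃ ≠ 0 ∧
      P₁.IsHomogeneous n ∧ P₂.IsHomogeneous n ∧ P₃.IsHomogeneous n ∧
      ∃ K : MvPolynomial (Fin 4) ℝ, chi ![P₁, P₂, P₃, 0] (Ga a) = K * Ga a := by
  rintro ⟨P₁, P₂, P₃, h1, h2, h3, hh1, hh2, hh3, K, hK⟩
  -- Notation
  set S : MvPolynomial (Fin 4) ℝ := X 0 ^ 2 + X 1 ^ 2 with hSdef
  set L : MvPolynomial (Fin 4) ℝ := X 0 * P₁ + X 1 * P₂ with hLdef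
  set A : MvPolynomial (Fin 4) ℝ := S * (C 4 * L) with hAdef
  set W : MvPolynomial (Fin 4) ℝ := C 2 * X 2 * P₃ - C (4 * a ^ 2) * L with hWdef
  set B : MvPolynomial (Fin 4) ℝ := X 2 ^ 2 + X 3 ^ 2 - C (2 * a ^ 2) * S with hBdef
  set e : ℝ := a ^ 4 - 1 with hedef
  have he : e ≠ 0 := by
    have hlt : (1:ℝ) < a ^ 4 := one_lt_pow₀ ha (by norm_num)
    rw [hedef]
    intro h
    nlinarith
  -- rewrite the two sides
  have hchi : chi ![P₁, P₂, P₃, 0] (Ga a) = A + W := by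
    simp only [hAdef, hWdef, hLdef, hSdef]
    simp [chi, Ga, Fin.sum_univ_four, pderiv_X, Pi.single_apply, map_ofNat]
    ring
  have hGa : Ga a = S ^ 2 + B + C e := by
    simp only [hBdef, hSdef, hedef, Ga]
    rw [show (C (a ^ 2) : MvPolynomial (Fin 4) ℝ) = C a ^ 2 by rw [map_pow],
      show (C (2 * a ^ 2) : MvPolynomial (Fin 4) ℝ) = 2 * C a ^ 2 by
        rw [map_mul, map_pow, map_ofNat],
      show (C (a ^ 4 - 1) : MvPolynomial (Fin 4) ℝ) = C a ^ 4 - 1 by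
        rw [map_sub, map_pow, map_one]]
    ring
  -- homogeneity
  have hhS : S.IsHomogeneous 2 := (isHomogeneous_X_pow _ 2).add (isHomogeneous_X_pow _ 2)
  have hhL : L.IsHomogeneous (n + 1) := by
    have := ((isHomogeneous_X ℝ 0).mul hh1).add ((isHomogeneous_X ℝ 1).mul hh2)
    simpa [Nat.add_comm] using this
  have hhA : A.IsHomogeneous (n + 3) := by
    have := hhS.mul (hhL.C_mul 4)
    simpa [show 2 + (n + 1) = n + 3 by omega] using this
  have hhW : W.IsHomogeneous (n + 1) := by
    refine IsHomogeneous.sub ?_ (hhL.C_mul _)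
    have := (((isHomogeneous_X ℝ 2).mul hh3).C_mul 2)
    simpa [Nat.add_comm, mul_assoc] using this
  have hhB : B.IsHomogeneous 2 :=
    ((isHomogeneous_X_pow _ 2).add (isHomogeneous_X_pow _ 2)).sub (hhS.C_mul _)
  have hhS2 : (S ^ 2).IsHomogeneous 4 := by simpa using hhS.pow 2
  -- apply phiH to the equation
  have key : Polynomial.C A * Polynomial.X ^ (n + 3) + Polynomial.C W * Polynomial.X ^ (n + 1)
      = phiH K * (Polynomial.C (S ^ 2) * Polynomial.X ^ 4
          + Polynomial.C B * Polynomial.X ^ 2 + Polynomial.C (C e)) := by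
    have h := congrArg phiH hK
    rw [hchi, hGa] at h
    simp only [map_add, map_mul] at h
    rw [phiH_homog hhA, phiH_homog hhW, phiH_homog hhS2, phiH_homog hhB, phiH_C] at h
    exact h
  -- basic nonvanishing facts
  have hS0 : S ≠ 0 := by
    intro h
    have := congrArg (eval fun i => if i = 0 then (1:ℝ) else 0) h
    simp [hSdef] at this
  have hCe : (C e : MvPolynomial (Fin 4) ℝ) ≠ 0 := MvPolynomial.C_ne_zero.mpr he
  rcases eq_or_ne K 0 with rfl | hKne
  · rw [map_zero, zero_mul] at key
    have hA0 : A = 0 := by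
      have h' := congrArg (fun p => Polynomial.coeff p (n + 3)) key
      simp only [Polynomial.coeff_add, Polynomial.coeff_C_mul, Polynomial.coeff_X_pow,
        if_pos rfl, if_neg (by omega : ¬ n + 3 = n + 1), mul_one, mul_zero, add_zero,
        Polynomial.coeff_zero] at h'
      simpa using h'
    have hW0 : W = 0 := by
      have h' := congrArg (fun p => Polynomial.coeff p (n + 1)) key
      simp only [Polynomial.coeff_add, Polynomial.coeff_C_mul, Polynomial.coeff_X_pow,
        if_pos rfl, if_neg (by omega : ¬ n + 1 = n + 3), mul_one, mul_zero, zero_add,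
        Polynomial.coeff_zero] at h'
      simpa using h'
    rw [hAdef] at hA0
    rw [hWdef] at hW0
    have hL0 : L = 0 := by
      rcases mul_eq_zero.mp hA0 with h | h
      · exact absurd h hS0
      · rcases mul_eq_zero.mp h with h' | h'
        · exact absurd h' (MvPolynomial.C_ne_zero.mpr (by norm_num))
        · exact h'
    rw [hL0, mul_zero, sub_zero] at hW0
    rcases mul_eq_zero.mp hW0 with h | h
    · rcases mul_eq_zero.mp h with h' | h'
      · exact absurd h' (MvPolynomial.C_ne_zero.mpr (by norm_num))
      · exact MvPolynomial.X_ne_zero 2 h'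
    · exact h3 h
  · -- K ≠ 0
    set g : Polynomial (MvPolynomial (Fin 4) ℝ) :=
      Polynomial.C (S ^ 2) * Polynomial.X ^ 4
        + Polynomial.C B * Polynomial.X ^ 2 + Polynomial.C (C e) with hgdef
    have hk0 : phiH K ≠ 0 := by
      intro h
      apply hKne
      rw [← phiH_eval_one K, h, Polynomial.eval_zero]
    have hg0coeff : g.coeff 0 = C e := by
      simp [hgdef, Polynomial.coeff_add, Polynomial.coeff_C_mul, Polynomial.coeff_X_pow]
    have hg0 : g ≠ 0 := by
      intro h
      rw [h, Polynomial.coeff_zero] at hg0coeff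
      exact hCe hg0coeff.symm
    have hgnd : g.natDegree = 4 := by
      have h1 : (Polynomial.C B * Polynomial.X ^ 2
          + Polynomial.C (C e)).natDegree < 4 := by
        refine lt_of_le_of_lt (Polynomial.natDegree_add_le _ _) ?_
        simp only [Polynomial.natDegree_C]
        exact lt_of_le_of_lt (by simpa using Polynomial.natDegree_C_mul_X_pow_le B 2)
          (by norm_num)
      have h2 : (Polynomial.C (S ^ 2) * Polynomial.X ^ 4).natDegree = 4 :=
        Polynomial.natDegree_C_mul_X_pow 4 _ (pow_ne_zero 2 hS0)
      rw [hgdef, add_assoc, Polynomial.natDegree_add_eq_left_of_natDegree_lt (by omega), h2]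
    have hgtd : g.natTrailingDegree = 0 :=
      Polynomial.natTrailingDegree_eq_zero.mpr (Or.inr (by rw [hg0coeff]; exact hCe))
    have hp0 : phiH K * g ≠ 0 := mul_ne_zero hk0 hg0
    have hpnd : (phiH K * g).natDegree = (phiH K).natDegree + 4 := by
      rw [Polynomial.natDegree_mul hk0 hg0, hgnd]
    have hptd : (phiH K * g).natTrailingDegree = (phiH K).natTrailingDegree := by
      rw [Polynomial.natTrailingDegree_mul hk0 hg0, hgtd, add_zero]
    have hcoeff : ∀ d : ℕ, d ≠ n + 1 → d ≠ n + 3 → (phiH K * g).coeff d = 0 := by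
      intro d hd1 hd3
      rw [← key]
      simp only [Polynomial.coeff_add, Polynomial.coeff_C_mul, Polynomial.coeff_X_pow,
        if_neg hd3, if_neg hd1, mul_zero, add_zero]
    have hnd_mem : (phiH K * g).natDegree = n + 1 ∨ (phiH K * g).natDegree = n + 3 := by
      by_contra hcon
      push_neg at hcon
      exact (Polynomial.leadingCoeff_ne_zero.mpr hp0) (hcoeff _ hcon.1 hcon.2)
    have htd_mem : (phiH K * g).natTrailingDegree = n + 1 ∨
        (phiH K * g).natTrailingDegree = n + 3 := by
      by_contra hcon
      push_neg at hcon
      exact (Polynomial.coeff_natTrailingDegree_ne_zero.mpr hp0) (hcoeff _ hcon.1 hcon.2)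
    have hle : (phiH K).natTrailingDegree ≤ (phiH K).natDegree :=
      Polynomial.natTrailingDegree_le_natDegree _
    omega
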